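/- Let S be a real vector space, K ⊆ S a nonempty convex set such that the cone C = K_sus ∪ {0} ⊆ ℝ × S has the Riesz decomposition property with respect to its intrinsic order (u ≼ v iff v − u ∈ C). Let W be a Hausdorff locally convex real topological vector space and let T be a convex set-valued map assigning to each x ∈ K a nonempty compact convex subset T(x) ⊆ W. Then T admits an affine selection. Moreover, for fixed x ∈ K and y ∈ T(x), there exists an affine selection a of T with a(x) = y if and only if for every N ∈ ℕ, every θ₁, …, θ_N > 0 with θ₁ + … + θ_N = 1 and every x₁, …, x_N ∈ K with x = θ₁ x₁ + … + θ_N x_N one has y ∈ θ₁ • T(x₁) + … + θ_N • T(x_N) (Minkowski sum). -/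

import Mathlib

open scoped Pointwise

set_option linter.unusedSectionVars false

open scoped Pointwise

namespace Stmt5Aux

/-! ### Generic finite Minkowski sum helpers -/

section SetSum
variable {W : Type*} [AddCommGroup W] [Module ℝ W]

theorem setSum_subset {n : ℕ} (A B : Fin n → Set W) (h : ∀ i, A i ⊆ B i) :
    ∑ i, A i ⊆ ∑ i, B i := by
  induction n with
  | zero => simp
  | succ n ih =>
    rw [Fin.sum_univ_castSucc (f := A), Fin.sum_univ_castSucc (f := B)]
    exact Set.add_subset_add (ih _ _ (fun i => h _)) (h _)

theorem sum_mem_setSum {n : ℕ} (A : Fin n → Set W) (w : Fin n → W) (h : ∀ i, w i ∈ A i) :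
    ∑ i, w i ∈ ∑ i, A i := by
  induction n with
  | zero => simp [Set.mem_zero]
  | succ n ih =>
    rw [Fin.sum_univ_castSucc (f := w), Fin.sum_univ_castSucc (f := A)]
    exact Set.add_mem_add (ih _ _ (fun i => h _)) (h _)

theorem setSum_nonempty {n : ℕ} (A : Fin n → Set W) (h : ∀ i, (A i).Nonempty) :
    (∑ i, A i).Nonempty := by
  obtain ⟨w, hw⟩ := Classical.axiomOfChoice h
  exact ⟨∑ i, w i, sum_mem_setSum A w hw⟩

theorem setSum_convex {n : ℕ} (A : Fin n → Set W) (h : ∀ i, Convex ℝ (A i)) :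
    Convex ℝ (∑ i, A i) := by
  induction n with
  | zero => simp only [Finset.univ_eq_empty, Finset.sum_empty]; exact convex_zero
  | succ n ih =>
    rw [Fin.sum_univ_castSucc (f := A)]
    exact Convex.add (ih _ (fun i => h _)) (h _)

theorem setSum_isCompact [TopologicalSpace W] [IsTopologicalAddGroup W]
    {n : ℕ} (A : Fin n → Set W) (h : ∀ i, IsCompact (A i)) :
    IsCompact (∑ i, A i) := by
  induction n with
  | zero =>
    simp only [Finset.univ_eq_empty, Finset.sum_empty]
    exact isCompact_singleton
  | succ n ih =>
    rw [Fin.sum_univ_castSucc (f := A)]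
    exact IsCompact.add (ih _ (fun i => h _)) (h _)

end SetSum

/-- transfer a sum over `Fin n` to a sum over the positive-support, reindexed by `Fin card`. -/
theorem sum_filter_equiv {M : Type*} [AddCommMonoid M] {n : ℕ} (θ : Fin n → ℝ)
    (g : Fin n → M) (h0 : ∀ j, θ j = 0 → g j = 0) :
    ∑ k : Fin (Finset.univ.filter (fun j => θ j ≠ 0) : Finset (Fin n)).card,
      g ((Finset.univ.filter (fun j => θ j ≠ 0)).equivFin.symm k : Fin n) = ∑ j, g j := by
  set P : Finset (Fin n) := Finset.univ.filter (fun j => θ j ≠ 0) with hP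
  have h1 : ∑ k : Fin P.card, g (P.equivFin.symm k : Fin n) = ∑ p : P, g (p : Fin n) :=
    Equiv.sum_comp P.equivFin.symm (fun p : P => g (p : Fin n))
  rw [h1, Finset.sum_coe_sort P (fun j => g j)]
  refine Finset.sum_subset (Finset.subset_univ P) (fun j _ hj => ?_)
  apply h0
  by_contra h
  exact hj (by simp [hP, h])

section Main

variable {S W : Type*} [AddCommGroup S] [Module ℝ S]
  [AddCommGroup W] [Module ℝ W] [TopologicalSpace W] [IsTopologicalAddGroup W]
  [ContinuousSMul ℝ W] [T2Space W] [LocallyConvexSpace ℝ W]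

variable {K : Set S} {T : S → Set W} {C : Set (ℝ × S)}

/-- convex combination stays in K -/
theorem memCombo (hKconv : Convex ℝ K) {u v : S} (hu : u ∈ K) (hv : v ∈ K) {θ : ℝ}
    (h0 : 0 < θ) (h1 : θ < 1) : (1 - θ) • u + θ • v ∈ K :=
  hKconv hu hv (by linarith) (le_of_lt h0) (by ring)

/-! ### The cone -/

def ConeEq (K : Set S) (C : Set (ℝ × S)) : Prop :=
  C = {p : ℝ × S | ∃ l : ℝ, 0 < l ∧ ∃ x ∈ K, p = (l, l • x)} ∪ {0}

theorem mem_cone (hC : ConeEq K C) (hKne : K.Nonempty) {p : ℝ × S} :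
    p ∈ C ↔ ∃ γ : ℝ, 0 ≤ γ ∧ ∃ c ∈ K, p = (γ, γ • c) := by
  rw [hC]
  constructor
  · rintro (⟨l, hl, x, hx, rfl⟩ | rfl)
    · exact ⟨l, le_of_lt hl, x, hx, rfl⟩
    · obtain ⟨c, hc⟩ := hKne
      exact ⟨0, le_refl _, c, hc, by simp [Prod.ext_iff]⟩
  · rintro ⟨γ, hγ, c, hc, rfl⟩
    rcases eq_or_lt_of_le hγ with h | h
    · right; simp [← h, Prod.ext_iff]
    · exact Or.inl ⟨γ, h, c, hc, rfl⟩

theorem cone_add (hC : ConeEq K C) (hKne : K.Nonempty) (hKconv : Convex ℝ K)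
    {p q : ℝ × S} (hp : p ∈ C) (hq : q ∈ C) : p + q ∈ C := by
  rw [mem_cone hC hKne] at hp hq ⊢
  obtain ⟨γ, hγ, c, hc, rfl⟩ := hp
  obtain ⟨δ, hδ, d, hd, rfl⟩ := hq
  rcases eq_or_lt_of_le (add_nonneg hγ hδ) with h | h
  · obtain ⟨e, he⟩ := hKne
    have hγ0 : γ = 0 := by linarith
    have hδ0 : δ = 0 := by linarith
    exact ⟨0, le_refl _, e, he, by simp [hγ0, hδ0, Prod.ext_iff]⟩
  · refine ⟨γ + δ, le_of_lt h, (γ/(γ+δ)) • c + (δ/(γ+δ)) • d,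
      hKconv hc hd (by positivity) (by positivity) (by field_simp), ?_⟩
    have hne : γ + δ ≠ 0 := ne_of_gt h
    simp only [Prod.mk_add_mk, Prod.mk.injEq, smul_add, smul_smul]
    exact ⟨trivial, by field_simp⟩

theorem cone_sum (hC : ConeEq K C) (hKne : K.Nonempty) (hKconv : Convex ℝ K)
    {m : ℕ} (v : Fin m → ℝ × S) (hv : ∀ j, v j ∈ C) : ∑ j, v j ∈ C := by
  induction m with
  | zero =>
    rw [mem_cone hC hKne]
    obtain ⟨c, hc⟩ := hKne
    exact ⟨0, le_refl _, c, hc, by simp [Prod.ext_iff]⟩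
  | succ m ih =>
    rw [Fin.sum_univ_castSucc]
    exact cone_add hC hKne hKconv (ih _ (fun j => hv _)) (hv _)

theorem cone_fst_nonneg (hC : ConeEq K C) (hKne : K.Nonempty) {p : ℝ × S} (hp : p ∈ C) :
    0 ≤ p.1 := by
  rw [mem_cone hC hKne] at hp
  obtain ⟨γ, hγ, c, hc, rfl⟩ := hp
  exact hγ

theorem cone_eq_zero (hC : ConeEq K C) (hKne : K.Nonempty) {p : ℝ × S} (hp : p ∈ C)
    (h : p.1 = 0) : p = 0 := by
  rw [mem_cone hC hKne] at hp
  obtain ⟨γ, hγ, c, hc, rfl⟩ := hp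
  simp only at h
  simp [h, Prod.ext_iff]

/-- Riesz: split one element below a finite sum. -/
theorem riesz_many (hC : ConeEq K C) (hKne : K.Nonempty) (hKconv : Convex ℝ K)
    (hRiesz : ∀ u ∈ C, ∀ v ∈ C, ∀ w ∈ C, u + v - w ∈ C →
      ∃ w₁ ∈ C, ∃ w₂ ∈ C, w = w₁ + w₂ ∧ u - w₁ ∈ C ∧ v - w₂ ∈ C) :
    ∀ (m : ℕ) (v : Fin m → ℝ × S), (∀ j, v j ∈ C) → ∀ w ∈ C, (∑ j, v j) - w ∈ C →
      ∃ ws : Fin m → ℝ × S, (∀ j, ws j ∈ C) ∧ w = ∑ j, ws j ∧ ∀ j, v j - ws j ∈ C := by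
  intro m
  induction m with
  | zero =>
    intro v hv w hw hsub
    have h1 : -w ∈ C := by simpa using hsub
    have hw0 : w = 0 := by
      refine cone_eq_zero hC hKne hw (le_antisymm ?_ (cone_fst_nonneg hC hKne hw))
      have h3 := cone_fst_nonneg hC hKne h1
      simpa using h3
    exact ⟨fun j => j.elim0, fun j => j.elim0, by simp [hw0], fun j => j.elim0⟩
  | succ m ih =>
    intro v hv w hw hsub
    have hsum : ∑ j, v j = (∑ j : Fin m, v (j.castSucc)) + v (Fin.last m) :=
      Fin.sum_univ_castSucc v
    obtain ⟨w₁, hw₁, w₂, hw₂, hweq, hvl, hvc⟩ :=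
      hRiesz (v (Fin.last m)) (hv _) (∑ j : Fin m, v (j.castSucc))
        (cone_sum hC hKne hKconv _ (fun j => hv _)) w hw
        (by rw [hsum] at hsub; convert hsub using 1; abel)
    obtain ⟨ws', hws'C, hws'sum, hws'sub⟩ := ih (fun j => v j.castSucc) (fun j => hv _) w₂ hw₂ hvc
    refine ⟨Fin.snoc ws' w₁, ?_, ?_, ?_⟩
    · intro j
      refine Fin.lastCases ?_ ?_ j
      · simpa using hw₁
      · intro i; simpa using hws'C i
    · rw [Fin.sum_univ_castSucc]
      simp only [Fin.snoc_castSucc, Fin.snoc_last]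
      rw [← hws'sum, hweq]; abel
    · intro j
      refine Fin.lastCases ?_ ?_ j
      · simpa using hvl
      · intro i; simpa using hws'sub i

/-- Riesz decomposition into a matrix. -/
theorem riesz_matrix (hC : ConeEq K C) (hKne : K.Nonempty) (hKconv : Convex ℝ K)
    (hRiesz : ∀ u ∈ C, ∀ v ∈ C, ∀ w ∈ C, u + v - w ∈ C →
      ∃ w₁ ∈ C, ∃ w₂ ∈ C, w = w₁ + w₂ ∧ u - w₁ ∈ C ∧ v - w₂ ∈ C) :
    ∀ (n m : ℕ) (u : Fin n → ℝ × S) (v : Fin m → ℝ × S), (∀ i, u i ∈ C) → (∀ j, v j ∈ C) →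
      ∑ i, u i = ∑ j, v j →
      ∃ ws : Fin n → Fin m → ℝ × S, (∀ i j, ws i j ∈ C) ∧
        (∀ i, ∑ j, ws i j = u i) ∧ (∀ j, ∑ i, ws i j = v j) := by
  intro n
  induction n with
  | zero =>
    intro m u v hu hv hsum
    have hz : ∀ j, v j = 0 := by
      intro j
      have h1 : ∑ j, (v j).1 = 0 := by
        have : (∑ j, v j).1 = 0 := by rw [← hsum]; simp
        simpa [Prod.fst_sum] using this
      have h2 : (v j).1 = 0 := by
        have := Finset.sum_eq_zero_iff_of_nonneg
          (fun j _ => cone_fst_nonneg hC hKne (hv j)) |>.mp h1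
        exact this j (Finset.mem_univ j)
      exact cone_eq_zero hC hKne (hv j) h2
    exact ⟨fun i => i.elim0, fun i => i.elim0, fun i => i.elim0,
      fun j => by simp [hz j]⟩
  | succ n ih =>
    intro m u v hu hv hsum
    have hlast : (∑ j, v j) - u (Fin.last n) ∈ C := by
      rw [← hsum, Fin.sum_univ_castSucc (f := u)]
      have : (∑ i : Fin n, u i.castSucc) + u (Fin.last n) - u (Fin.last n)
          = ∑ i : Fin n, u i.castSucc := by abel
      rw [this]
      exact cone_sum hC hKne hKconv _ (fun i => hu _)
    obtain ⟨wsl, hwslC, hwslsum, hwslsub⟩ :=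
      riesz_many hC hKne hKconv hRiesz m v hv (u (Fin.last n)) (hu _) hlast
    have hsum' : ∑ i : Fin n, u i.castSucc = ∑ j, (v j - wsl j) := by
      rw [Finset.sum_sub_distrib, ← hsum, ← hwslsum, Fin.sum_univ_castSucc (f := u)]
      abel
    obtain ⟨ws', hws'C, hws'row, hws'col⟩ :=
      ih m (fun i => u i.castSucc) (fun j => v j - wsl j) (fun i => hu _) hwslsub hsum'
    refine ⟨Fin.snoc ws' wsl, ?_, ?_, ?_⟩
    · intro i
      refine Fin.lastCases ?_ ?_ i
      · intro j; simpa using hwslC j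
      · intro i' j; simpa using hws'C i' j
    · intro i
      refine Fin.lastCases ?_ ?_ i
      · simpa using hwslsum.symm
      · intro i'; simpa using hws'row i'
    · intro j
      rw [Fin.sum_univ_castSucc]
      simp only [Fin.snoc_castSucc, Fin.snoc_last]
      rw [hws'col j]
      abel

/-! ### Decompositions -/

structure Dec (K : Set S) (x : S) where
  n : ℕ
  θ : Fin n → ℝ
  xs : Fin n → S
  nonneg : ∀ j, 0 ≤ θ j
  sum_one : ∑ j, θ j = 1
  mem : ∀ j, xs j ∈ K
  eq : x = ∑ j, θ j • xs j

def decSum (T : S → Set W) {x : S} (d : Dec K x) : Set W := ∑ j, d.θ j • T (d.xs j)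

def Dec.triv {x : S} (hx : x ∈ K) : Dec K x where
  n := 1
  θ := fun _ => 1
  xs := fun _ => x
  nonneg := fun _ => zero_le_one
  sum_one := by simp
  mem := fun _ => hx
  eq := by simp

theorem decSum_triv {x : S} (hx : x ∈ K) : decSum T (Dec.triv (K := K) hx) = T x := by
  show ∑ _j : Fin 1, (1:ℝ) • T x = T x
  rw [Fin.sum_univ_one, one_smul]

def GoodVals (K : Set S) (T : S → Set W) : Prop :=
  ∀ x ∈ K, (T x).Nonempty ∧ IsCompact (T x) ∧ Convex ℝ (T x)

def ConvMap (K : Set S) (T : S → Set W) : Prop :=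
  ∀ x ∈ K, ∀ y ∈ K, ∀ θ : ℝ, 0 < θ → θ < 1 →
    (1 - θ) • T x + θ • T y ⊆ T ((1 - θ) • x + θ • y)

/-- multi-convexity of a convex map -/
theorem decSum_subset_base (hKconv : Convex ℝ K) (hT : GoodVals K T) (hTc : ConvMap K T) :
    ∀ (n : ℕ) (θ : Fin n → ℝ) (xs : Fin n → S), (∀ j, 0 ≤ θ j) → ∑ j, θ j = 1 →
      (∀ j, xs j ∈ K) → ∑ j, θ j • T (xs j) ⊆ T (∑ j, θ j • xs j) := by
  intro n
  induction n with
  | zero => intro θ xs h0 h1 hm; simp at h1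
  | succ n ih =>
    intro θ xs h0 h1 hm
    set s : ℝ := ∑ j : Fin n, θ j.castSucc with hs
    have hsl : s + θ (Fin.last n) = 1 := by rw [hs, ← Fin.sum_univ_castSucc]; exact h1
    have hs0 : 0 ≤ s := Finset.sum_nonneg (fun j _ => h0 _)
    rcases eq_or_lt_of_le (h0 (Fin.last n)) with hl0 | hl0
    · -- θ last = 0
      have hθl : θ (Fin.last n) = 0 := hl0.symm
      have hTne : (T (xs (Fin.last n))).Nonempty := (hT _ (hm _)).1
      have e1 : ∑ j, θ j • T (xs j) = ∑ j : Fin n, θ j.castSucc • T (xs j.castSucc) := by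
        rw [Fin.sum_univ_castSucc (f := fun j => θ j • T (xs j)), hθl,
          Set.zero_smul_set hTne, add_zero]
      have e2 : ∑ j, θ j • xs j = ∑ j : Fin n, θ j.castSucc • xs j.castSucc := by
        rw [Fin.sum_univ_castSucc (f := fun j => θ j • xs j), hθl, zero_smul, add_zero]
      rw [e1, e2]
      exact ih _ _ (fun j => h0 _) (by rw [← hs]; linarith) (fun j => hm _)
    · rcases eq_or_lt_of_le hs0 with hs0' | hs0'
      · -- s = 0, θ last = 1
        have hθl1 : θ (Fin.last n) = 1 := by linarith
        have hzero : ∀ j : Fin n, θ j.castSucc = 0 := by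
          intro j
          have := (Finset.sum_eq_zero_iff_of_nonneg (fun j _ => h0 (Fin.castSucc j))).mp
            hs0'.symm
          exact this j (Finset.mem_univ j)
        have e1 : ∑ j, θ j • T (xs j) = T (xs (Fin.last n)) := by
          rw [Fin.sum_univ_castSucc (f := fun j => θ j • T (xs j)), hθl1, one_smul]
          have : ∀ j : Fin n, θ j.castSucc • T (xs j.castSucc) = (0 : Set W) := by
            intro j; rw [hzero j, Set.zero_smul_set (hT _ (hm _)).1]
          rw [Finset.sum_congr rfl (fun j _ => this j), Finset.sum_const_zero, zero_add]
        have e2 : ∑ j, θ j • xs j = xs (Fin.last n) := by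
          rw [Fin.sum_univ_castSucc (f := fun j => θ j • xs j), hθl1, one_smul]
          have : ∀ j : Fin n, θ j.castSucc • xs j.castSucc = (0 : S) := by
            intro j; rw [hzero j, zero_smul]
          rw [Finset.sum_congr rfl (fun j _ => this j), Finset.sum_const_zero, zero_add]
        rw [e1, e2]
      · -- 0 < s, 0 < θ last
        have hθl1 : θ (Fin.last n) < 1 := by linarith
        set x' : S := ∑ j : Fin n, (θ j.castSucc / s) • xs j.castSucc with hx'
        have hx'K : x' ∈ K := by
          refine hKconv.sum_mem (fun j _ => div_nonneg (h0 _) hs0) ?_ (fun j _ => hm _)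
          rw [← Finset.sum_div, ← hs, div_self hs0'.ne']
        have hIH : ∑ j : Fin n, (θ j.castSucc / s) • T (xs j.castSucc) ⊆ T x' := by
          refine ih _ _ (fun j => div_nonneg (h0 _) hs0) ?_ (fun j => hm _)
          rw [← Finset.sum_div, ← hs, div_self hs0'.ne']
        have hmul : ∀ r : ℝ, s * (r / s) = r := fun r => by field_simp
        have e1 : ∑ j : Fin n, θ j.castSucc • T (xs j.castSucc)
            = s • ∑ j : Fin n, (θ j.castSucc / s) • T (xs j.castSucc) := by
          rw [Finset.smul_sum]
          refine Finset.sum_congr rfl (fun j _ => ?_)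
          rw [smul_smul, hmul]
        have e2 : ∑ j : Fin n, θ j.castSucc • xs j.castSucc = s • x' := by
          rw [hx', Finset.smul_sum]
          refine Finset.sum_congr rfl (fun j _ => ?_)
          rw [smul_smul, hmul]
        rw [Fin.sum_univ_castSucc (f := fun j => θ j • T (xs j)),
          Fin.sum_univ_castSucc (f := fun j => θ j • xs j), e1, e2]
        have hcm := hTc x' hx'K (xs (Fin.last n)) (hm _) (θ (Fin.last n)) hl0 hθl1
        have hseq : (1 : ℝ) - θ (Fin.last n) = s := by linarith
        rw [hseq] at hcm
        exact Set.Subset.trans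
          (Set.add_subset_add (Set.smul_set_mono hIH) (Set.Subset.refl _)) hcm

/-- scaled multi-convexity -/
theorem decSum_subset_scaled (hKconv : Convex ℝ K) (hT : GoodVals K T) (hTc : ConvMap K T)
    {n : ℕ} {θ : Fin n → ℝ} {xs : Fin n → S} {t : ℝ} {x₀ : S}
    (hθ : ∀ j, 0 ≤ θ j) (hsum : ∑ j, θ j = t) (hmem : ∀ j, xs j ∈ K)
    (hx₀ : x₀ ∈ K) (heq : t • x₀ = ∑ j, θ j • xs j) :
    ∑ j, θ j • T (xs j) ⊆ t • T x₀ := by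
  have ht0 : 0 ≤ t := hsum ▸ Finset.sum_nonneg (fun j _ => hθ j)
  rcases eq_or_lt_of_le ht0 with ht0' | ht0'
  · have hz : ∀ j, θ j = 0 := by
      intro j
      have := (Finset.sum_eq_zero_iff_of_nonneg (fun j _ => hθ j)).mp
        (by rw [hsum]; exact ht0'.symm)
      exact this j (Finset.mem_univ j)
    have e1 : ∑ j, θ j • T (xs j) = (0 : Set W) := by
      rw [Finset.sum_congr rfl (fun j _ => by rw [hz j, Set.zero_smul_set (hT _ (hmem j)).1]),
        Finset.sum_const_zero]
    rw [e1, ← ht0', Set.zero_smul_set (hT _ hx₀).1]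
  · have hmul : ∀ r : ℝ, t * (r / t) = r := fun r => by field_simp
    have hx' : ∑ j, (θ j / t) • xs j = x₀ := by
      have h1 : (1/t) • (t • x₀) = x₀ := by rw [smul_smul]; field_simp; exact one_smul ℝ x₀
      rw [← h1, heq, Finset.smul_sum]
      refine Finset.sum_congr rfl (fun j _ => ?_)
      rw [smul_smul]
      congr 1
      field_simp
    have key := decSum_subset_base hKconv hT hTc n (fun j => θ j / t) xs
      (fun j => div_nonneg (hθ j) ht0)
      (by rw [← Finset.sum_div, hsum, div_self ht0'.ne']) hmem
    rw [hx'] at key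
    calc ∑ j, θ j • T (xs j) = t • ∑ j, (θ j / t) • T (xs j) := by
          rw [Finset.smul_sum]
          refine Finset.sum_congr rfl (fun j _ => ?_)
          rw [smul_smul, hmul]
      _ ⊆ t • T x₀ := Set.smul_set_mono key

theorem decSum_subset (hKconv : Convex ℝ K) (hT : GoodVals K T) (hTc : ConvMap K T)
    {x : S} (hx : x ∈ K) (d : Dec K x) : decSum T d ⊆ T x := by
  have h := decSum_subset_base hKconv hT hTc d.n d.θ d.xs d.nonneg d.sum_one d.mem
  rw [← d.eq] at h
  exact h

theorem decSum_nonempty (hT : GoodVals K T) {x : S} (d : Dec K x) :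
    (decSum T d).Nonempty :=
  setSum_nonempty _ (fun j => ((hT _ (d.mem j)).1).smul_set)

theorem decSum_isCompact (hT : GoodVals K T) {x : S} (d : Dec K x) :
    IsCompact (decSum T d) :=
  setSum_isCompact _ (fun j => ((hT _ (d.mem j)).2.1).smul _)

theorem decSum_convex (hT : GoodVals K T) {x : S} (d : Dec K x) :
    Convex ℝ (decSum T d) :=
  setSum_convex _ (fun j => ((hT _ (d.mem j)).2.2).smul _)

/-- common refinement data -/
theorem dec_refine (hC : ConeEq K C) (hKne : K.Nonempty) (hKconv : Convex ℝ K)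
    (hRiesz : ∀ u ∈ C, ∀ v ∈ C, ∀ w ∈ C, u + v - w ∈ C →
      ∃ w₁ ∈ C, ∃ w₂ ∈ C, w = w₁ + w₂ ∧ u - w₁ ∈ C ∧ v - w₂ ∈ C)
    {x : S} {n m : ℕ} (α : Fin n → ℝ) (a : Fin n → S) (β : Fin m → ℝ) (b : Fin m → S)
    (hα : ∀ i, 0 ≤ α i) (ha : ∀ i, a i ∈ K) (hβ : ∀ j, 0 ≤ β j) (hb : ∀ j, b j ∈ K)
    (hα1 : ∑ i, α i = ∑ j, β j)
    (hxa : x = ∑ i, α i • a i) (hxb : x = ∑ j, β j • b j) :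
    ∃ (γ : Fin n → Fin m → ℝ) (c : Fin n → Fin m → S),
      (∀ i j, 0 ≤ γ i j) ∧ (∀ i j, c i j ∈ K) ∧
      (∀ i, ∑ j, γ i j = α i) ∧ (∀ i, ∑ j, γ i j • c i j = α i • a i) ∧
      (∀ j, ∑ i, γ i j = β j) ∧ (∀ j, ∑ i, γ i j • c i j = β j • b j) := by
  obtain ⟨ws, hwsC, hrow, hcol⟩ := riesz_matrix hC hKne hKconv hRiesz n m
    (fun i => (α i, α i • a i)) (fun j => (β j, β j • b j))
    (fun i => (mem_cone hC hKne).mpr ⟨α i, hα i, a i, ha i, rfl⟩)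
    (fun j => (mem_cone hC hKne).mpr ⟨β j, hβ j, b j, hb j, rfl⟩)
    (by
      apply Prod.ext
      · simpa [Prod.fst_sum] using hα1
      · simp only [Prod.snd_sum]
        rw [← hxa, ← hxb])
  have hmem := fun i j => (mem_cone hC hKne).mp (hwsC i j)
  choose γ hγ c hcK hws using hmem
  refine ⟨γ, c, hγ, hcK, ?_, ?_, ?_, ?_⟩
  · intro i
    have h := congrArg Prod.fst (hrow i)
    simpa [Prod.fst_sum, hws] using h
  · intro i
    have h := congrArg Prod.snd (hrow i)
    simpa [Prod.snd_sum, hws] using h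
  · intro j
    have h := congrArg Prod.fst (hcol j)
    simpa [Prod.fst_sum, hws] using h
  · intro j
    have h := congrArg Prod.snd (hcol j)
    simpa [Prod.snd_sum, hws] using h

theorem prod_transfer {M : Type*} [AddCommMonoid M] {n m : ℕ} (g : Fin n → Fin m → M) :
    ∑ k : Fin (n * m), g (finProdFinEquiv.symm k).1 (finProdFinEquiv.symm k).2
      = ∑ i, ∑ j, g i j := by
  rw [Equiv.sum_comp finProdFinEquiv.symm (fun p : Fin n × Fin m => g p.1 p.2),
    Fintype.sum_prod_type]

theorem mk_scaled_dec {t : ℝ} (ht : 0 < t) {m : ℕ} {γ : Fin m → ℝ} {c : Fin m → S}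
    (hγ : ∀ j, 0 ≤ γ j) (hc : ∀ j, c j ∈ K) (hsum : ∑ j, γ j = t) {x : S}
    (heq : ∑ j, γ j • c j = t • x) :
    ∃ dx : Dec K x, t • decSum T dx = ∑ j, γ j • T (c j) := by
  have hmul : ∀ r : ℝ, t * (r / t) = r := fun r => by field_simp
  refine ⟨⟨m, fun j => γ j / t, c, fun j => div_nonneg (hγ j) ht.le,
    by rw [← Finset.sum_div, hsum, div_self ht.ne'], hc, ?_⟩, ?_⟩
  · have h1 : (1/t) • (t • x) = x := by rw [smul_smul]; field_simp; exact one_smul ℝ x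
    rw [← h1, ← heq, Finset.smul_sum]
    refine Finset.sum_congr rfl (fun j _ => ?_)
    rw [smul_smul]
    congr 1
    field_simp
  · show t • ∑ j, (γ j / t) • T (c j) = ∑ j, γ j • T (c j)
    rw [Finset.smul_sum]
    refine Finset.sum_congr rfl (fun j _ => ?_)
    rw [smul_smul, hmul]

/-- the intersection map -/
def Tstar (K : Set S) (T : S → Set W) (x : S) : Set W := ⋂ d : Dec K x, decSum T d

section RieszCtx

variable (hC : ConeEq K C) (hKne : K.Nonempty) (hKconv : Convex ℝ K)
  (hRiesz : ∀ u ∈ C, ∀ v ∈ C, ∀ w ∈ C, u + v - w ∈ C →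
      ∃ w₁ ∈ C, ∃ w₂ ∈ C, w = w₁ + w₂ ∧ u - w₁ ∈ C ∧ v - w₂ ∈ C)
  (hT : GoodVals K T) (hTc : ConvMap K T)

include hC hKne hKconv hRiesz hT hTc

/-- directedness of decompositions -/
theorem dec_directed {x : S} (d e : Dec K x) :
    ∃ d'' : Dec K x, decSum T d'' ⊆ decSum T d ∧ decSum T d'' ⊆ decSum T e := by
  obtain ⟨γ, c, hγ, hcK, hrow1, hrow2, hcol1, hcol2⟩ := dec_refine hC hKne hKconv hRiesz
    d.θ d.xs e.θ e.xs d.nonneg d.mem e.nonneg e.mem (by rw [d.sum_one, e.sum_one]) d.eq e.eq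
  refine ⟨⟨d.n * e.n, fun k => γ (finProdFinEquiv.symm k).1 (finProdFinEquiv.symm k).2,
    fun k => c (finProdFinEquiv.symm k).1 (finProdFinEquiv.symm k).2,
    fun k => hγ _ _, ?_, fun k => hcK _ _, ?_⟩, ?_, ?_⟩
  · rw [prod_transfer γ]
    rw [Finset.sum_congr rfl (fun i (_ : i ∈ Finset.univ) => hrow1 i)]
    exact d.sum_one
  · show x = ∑ k : Fin (d.n * e.n), _
    rw [prod_transfer (fun i j => γ i j • c i j)]
    rw [Finset.sum_congr rfl (fun i (_ : i ∈ Finset.univ) => hrow2 i)]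
    exact d.eq
  · show decSum T _ ⊆ decSum T d
    unfold decSum
    simp only
    rw [prod_transfer (fun i j => γ i j • T (c i j))]
    refine setSum_subset _ _ (fun i => ?_)
    exact decSum_subset_scaled hKconv hT hTc (fun j => hγ i j) (hrow1 i) (fun j => hcK i j)
      (d.mem i) (hrow2 i).symm
  · show decSum T _ ⊆ decSum T e
    unfold decSum
    simp only
    rw [prod_transfer (fun i j => γ i j • T (c i j)), Finset.sum_comm]
    refine setSum_subset _ _ (fun j => ?_)
    exact decSum_subset_scaled hKconv hT hTc (fun i => hγ i j) (hcol1 j) (fun i => hcK i j)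
      (e.mem j) (hcol2 j).symm

theorem Tstar_subset {x : S} (hx : x ∈ K) : Tstar K T x ⊆ T x := by
  have h := Set.iInter_subset (fun d : Dec K x => decSum T d) (Dec.triv hx)
  rwa [decSum_triv hx] at h

theorem Tstar_closed (x : S) : IsClosed (Tstar K T x) :=
  isClosed_iInter (fun d => (decSum_isCompact hT d).isClosed)

theorem Tstar_convex (x : S) : Convex ℝ (Tstar K T x) :=
  convex_iInter (fun d => decSum_convex hT d)

theorem Tstar_isCompact {x : S} (hx : x ∈ K) : IsCompact (Tstar K T x) :=
  IsCompact.of_isClosed_subset (hT x hx).2.1 (Tstar_closed hC hKne hKconv hRiesz hT hTc x) (Tstar_subset hC hKne hKconv hRiesz hT hTc hx)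

theorem Tstar_nonempty {x : S} (hx : x ∈ K) : (Tstar K T x).Nonempty := by
  have : Nonempty (Dec K x) := ⟨Dec.triv hx⟩
  refine IsCompact.nonempty_iInter_of_directed_nonempty_isCompact_isClosed
    (fun d : Dec K x => decSum T d) ?_ (fun d => decSum_nonempty hT d)
    (fun d => decSum_isCompact hT d) (fun d => (decSum_isCompact hT d).isClosed)
  intro d e
  obtain ⟨d'', h1, h2⟩ := dec_directed hC hKne hKconv hRiesz hT hTc d e
  exact ⟨d'', h1, h2⟩

/-- splitting decompositions of a combination -/
theorem dec_split {x y : S} (hx : x ∈ K) (hy : y ∈ K) {θ : ℝ} (h0 : 0 < θ) (h1 : θ < 1)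
    (d : Dec K ((1 - θ) • x + θ • y)) :
    ∃ (dx : Dec K x) (dy : Dec K y),
      (1 - θ) • decSum T dx + θ • decSum T dy ⊆ decSum T d := by
  have h1θ : (0:ℝ) < 1 - θ := by linarith
  obtain ⟨γ, c, hγ, hcK, hrow1, hrow2, hcol1, hcol2⟩ := dec_refine hC hKne hKconv hRiesz
    (![1-θ, θ]) (![x, y]) d.θ d.xs
    (by intro i; fin_cases i <;> simp <;> linarith)
    (by intro i; fin_cases i <;> simpa)
    d.nonneg d.mem
    (by rw [d.sum_one, Fin.sum_univ_two]; simp)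
    (by rw [Fin.sum_univ_two]; simp)
    d.eq
  have h00 : (∑ j, γ 0 j) = 1 - θ := by simpa using hrow1 0
  have h01 : (∑ j, γ 0 j • c 0 j) = (1-θ) • x := by simpa using hrow2 0
  have h10 : (∑ j, γ 1 j) = θ := by simpa using hrow1 1
  have h11 : (∑ j, γ 1 j • c 1 j) = θ • y := by simpa using hrow2 1
  obtain ⟨dx, hdx⟩ := mk_scaled_dec (T := T) h1θ (fun j => hγ 0 j) (fun j => hcK 0 j) h00 h01
  obtain ⟨dy, hdy⟩ := mk_scaled_dec (T := T) h0 (fun j => hγ 1 j) (fun j => hcK 1 j) h10 h11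
  refine ⟨dx, dy, ?_⟩
  rw [hdx, hdy, ← Finset.sum_add_distrib]
  show ∑ j, (γ 0 j • T (c 0 j) + γ 1 j • T (c 1 j)) ⊆ ∑ j, d.θ j • T (d.xs j)
  refine setSum_subset _ _ (fun j => ?_)
  have hsum2 : ∑ i : Fin 2, ![γ 0 j, γ 1 j] i = d.θ j := by
    rw [Fin.sum_univ_two]
    simpa [Fin.sum_univ_two] using hcol1 j
  have heq2 : d.θ j • d.xs j = ∑ i : Fin 2, ![γ 0 j, γ 1 j] i • ![c 0 j, c 1 j] i := by
    rw [Fin.sum_univ_two]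
    simpa [Fin.sum_univ_two] using (hcol2 j).symm
  have key := decSum_subset_scaled hKconv hT hTc (n := 2) (θ := ![γ 0 j, γ 1 j])
    (xs := ![c 0 j, c 1 j]) (t := d.θ j) (x₀ := d.xs j)
    (by intro i; fin_cases i <;> simp [hγ 0 j, hγ 1 j])
    hsum2
    (by intro i; fin_cases i <;> simp [hcK 0 j, hcK 1 j])
    (d.mem j) heq2
  rw [Fin.sum_univ_two] at key
  simpa using key

/-- merging decompositions -/
theorem dec_merge {x y : S} {θ : ℝ} (h0 : 0 < θ) (h1 : θ < 1)
    (dx : Dec K x) (dy : Dec K y) :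
    ∃ d : Dec K ((1 - θ) • x + θ • y),
      decSum T d = (1 - θ) • decSum T dx + θ • decSum T dy := by
  have h1θ : (0:ℝ) < 1 - θ := by linarith
  refine ⟨⟨dx.n + dy.n,
    Fin.append (fun i => (1-θ) * dx.θ i) (fun j => θ * dy.θ j),
    Fin.append dx.xs dy.xs, ?_, ?_, ?_, ?_⟩, ?_⟩
  · intro k
    refine Fin.addCases ?_ ?_ k
    · intro i; simp only [Fin.append_left]; exact mul_nonneg h1θ.le (dx.nonneg i)
    · intro j; simp only [Fin.append_right]; exact mul_nonneg h0.le (dy.nonneg j)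
  · rw [Fin.sum_univ_add]
    simp only [Fin.append_left, Fin.append_right]
    rw [← Finset.mul_sum, ← Finset.mul_sum, dx.sum_one, dy.sum_one]
    ring
  · intro k
    refine Fin.addCases ?_ ?_ k
    · intro i; simp only [Fin.append_left]; exact dx.mem i
    · intro j; simp only [Fin.append_right]; exact dy.mem j
  · show (1-θ) • x + θ • y = ∑ k : Fin (dx.n + dy.n),
      Fin.append (fun i => (1-θ) * dx.θ i) (fun j => θ * dy.θ j) k •
        Fin.append dx.xs dy.xs k
    rw [Fin.sum_univ_add]
    simp only [Fin.append_left, Fin.append_right, mul_smul]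
    rw [← Finset.smul_sum, ← Finset.smul_sum, ← dx.eq, ← dy.eq]
  · show (∑ k : Fin (dx.n + dy.n),
      Fin.append (fun i => (1-θ) * dx.θ i) (fun j => θ * dy.θ j) k •
        T (Fin.append dx.xs dy.xs k)) = (1 - θ) • decSum T dx + θ • decSum T dy
    rw [Fin.sum_univ_add]
    simp only [Fin.append_left, Fin.append_right, mul_smul]
    rw [← Finset.smul_sum, ← Finset.smul_sum]
    rfl

/-- Tstar is an affine map -/
theorem Tstar_affine {x y : S} (hx : x ∈ K) (hy : y ∈ K) {θ : ℝ} (h0 : 0 < θ) (h1 : θ < 1) :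
    (1 - θ) • Tstar K T x + θ • Tstar K T y = Tstar K T ((1 - θ) • x + θ • y) := by
  apply Set.Subset.antisymm
  · intro w hw
    obtain ⟨u', hu', v', hv', rfl⟩ := Set.mem_add.mp hw
    obtain ⟨u, hu, rfl⟩ := Set.mem_smul_set.mp hu'
    obtain ⟨v, hv, rfl⟩ := Set.mem_smul_set.mp hv'
    refine Set.mem_iInter.mpr (fun d => ?_)
    obtain ⟨dx, dy, hsub⟩ := dec_split hC hKne hKconv hRiesz hT hTc hx hy h0 h1 d
    refine hsub (Set.add_mem_add (Set.smul_mem_smul_set ?_) (Set.smul_mem_smul_set ?_))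
    · exact Set.mem_iInter.mp hu dx
    · exact Set.mem_iInter.mp hv dy
  · intro w hw
    classical
    have hne : Nonempty (Dec K x × Dec K y) := ⟨(Dec.triv hx, Dec.triv hy)⟩
    set F : Dec K x × Dec K y → Set (W × W) := fun p =>
      {q | q.1 ∈ decSum T p.1 ∧ q.2 ∈ decSum T p.2 ∧ (1-θ) • q.1 + θ • q.2 = w} with hF
    have hFc : ∀ p, IsCompact (F p) := by
      intro p
      have h1' : IsCompact ((decSum T p.1) ×ˢ (decSum T p.2)) :=
        (decSum_isCompact hT p.1).prod (decSum_isCompact hT p.2)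
      have h2' : IsClosed {q : W × W | (1-θ) • q.1 + θ • q.2 = w} :=
        isClosed_eq (((continuous_fst.const_smul _)).add ((continuous_snd.const_smul _)))
          continuous_const
      have : F p = ((decSum T p.1) ×ˢ (decSum T p.2)) ∩ {q | (1-θ) • q.1 + θ • q.2 = w} := by
        ext q; simp [hF, Set.mem_prod, and_assoc]
      rw [this]
      exact h1'.inter_right h2'
    have hFne : ∀ p, (F p).Nonempty := by
      rintro ⟨dx, dy⟩
      obtain ⟨d, hd⟩ := dec_merge hC hKne hKconv hRiesz hT hTc h0 h1 dx dy
      have hwd : w ∈ decSum T d := Set.mem_iInter.mp hw d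
      rw [hd] at hwd
      obtain ⟨u', hu', v', hv', huv⟩ := Set.mem_add.mp hwd
      obtain ⟨u, hu, rfl⟩ := Set.mem_smul_set.mp hu'
      obtain ⟨v, hv, rfl⟩ := Set.mem_smul_set.mp hv'
      exact ⟨(u, v), hu, hv, huv⟩
    have hdir : Directed (· ⊇ ·) F := by
      rintro ⟨dx1, dy1⟩ ⟨dx2, dy2⟩
      obtain ⟨dx3, hx1, hx2⟩ := dec_directed hC hKne hKconv hRiesz hT hTc dx1 dx2
      obtain ⟨dy3, hy1, hy2⟩ := dec_directed hC hKne hKconv hRiesz hT hTc dy1 dy2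
      exact ⟨(dx3, dy3), fun q hq => ⟨hx1 hq.1, hy1 hq.2.1, hq.2.2⟩,
        fun q hq => ⟨hx2 hq.1, hy2 hq.2.1, hq.2.2⟩⟩
    obtain ⟨q, hq⟩ := IsCompact.nonempty_iInter_of_directed_nonempty_isCompact_isClosed
      F hdir hFne hFc (fun p => (hFc p).isClosed)
    have hq' := Set.mem_iInter.mp hq
    have hqx : q.1 ∈ Tstar K T x :=
      Set.mem_iInter.mpr (fun dx => (hq' (dx, Dec.triv hy)).1)
    have hqy : q.2 ∈ Tstar K T y :=
      Set.mem_iInter.mpr (fun dy => (hq' (Dec.triv hx, dy)).2.1)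
    have hcomb : (1-θ) • q.1 + θ • q.2 = w := (hq' (Dec.triv hx, Dec.triv hy)).2.2
    rw [← hcomb]
    exact Set.add_mem_add (Set.smul_mem_smul_set hqx) (Set.smul_mem_smul_set hqy)

end RieszCtx

/-! ### Affine maps and selections -/

def AffMap (K : Set S) (B : S → Set W) : Prop :=
  (∀ z ∈ K, (B z).Nonempty ∧ IsCompact (B z) ∧ Convex ℝ (B z)) ∧
  (∀ x ∈ K, ∀ y ∈ K, ∀ θ : ℝ, 0 < θ → θ < 1 →
    (1 - θ) • B x + θ • B y = B ((1 - θ) • x + θ • y))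

def argmaxMap (f : W →L[ℝ] ℝ) (B : S → Set W) : S → Set W :=
  fun z => B z ∩ {w | ∀ u ∈ B z, f u ≤ f w}

theorem argmax_affmap (hKconv : Convex ℝ K) (f : W →L[ℝ] ℝ) {B : S → Set W}
    (hB : AffMap K B) :
    AffMap K (argmaxMap f B) ∧ ∀ z, argmaxMap f B z ⊆ B z := by
  obtain ⟨hvals, haff⟩ := hB
  have hsetOf : ∀ z, {w | ∀ u ∈ B z, f u ≤ f w} = ⋂ u ∈ B z, {w | f u ≤ f w} := by
    intro z; ext w; simp
  refine ⟨⟨?_, ?_⟩, fun z => Set.inter_subset_left⟩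
  · intro z hz
    obtain ⟨hne, hcomp, hconv⟩ := hvals z hz
    refine ⟨?_, ?_, ?_⟩
    · obtain ⟨w, hw, hmax⟩ := hcomp.exists_isMaxOn hne f.continuous.continuousOn
      exact ⟨w, hw, fun u hu => hmax hu⟩
    · refine hcomp.inter_right ?_
      rw [hsetOf z]
      exact isClosed_biInter (fun u _ => isClosed_le continuous_const f.continuous)
    · refine hconv.inter ?_
      rw [hsetOf z]
      exact convex_iInter₂ (fun u _ => convex_halfSpace_ge ⟨f.map_add, f.map_smul⟩ _)
  · intro x hx y hy θ h0 h1
    have hBeq := haff x hx y hy θ h0 h1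
    have h1θ : (0:ℝ) < 1 - θ := by linarith
    have ef : ∀ a b : W, f ((1-θ) • a + θ • b) = (1-θ) * f a + θ * f b := by
      intro a b; simp [map_add, map_smul]
    apply Set.Subset.antisymm
    · intro w hw
      obtain ⟨u', hu', v', hv', rfl⟩ := Set.mem_add.mp hw
      obtain ⟨u, hu, rfl⟩ := Set.mem_smul_set.mp hu'
      obtain ⟨v, hv, rfl⟩ := Set.mem_smul_set.mp hv'
      constructor
      · rw [← hBeq]
        exact Set.add_mem_add (Set.smul_mem_smul_set hu.1) (Set.smul_mem_smul_set hv.1)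
      · intro w' hw'
        rw [← hBeq] at hw'
        obtain ⟨u₂', hu₂', v₂', hv₂', rfl⟩ := Set.mem_add.mp hw'
        obtain ⟨u₂, hu₂, rfl⟩ := Set.mem_smul_set.mp hu₂'
        obtain ⟨v₂, hv₂, rfl⟩ := Set.mem_smul_set.mp hv₂'
        rw [ef, ef]
        exact add_le_add (mul_le_mul_of_nonneg_left (hu.2 u₂ hu₂) h1θ.le)
          (mul_le_mul_of_nonneg_left (hv.2 v₂ hv₂) h0.le)
    · intro w hw
      have hwB : w ∈ B ((1-θ) • x + θ • y) := hw.1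
      rw [← hBeq] at hwB
      obtain ⟨u', hu', v', hv', rfl⟩ := Set.mem_add.mp hwB
      obtain ⟨u, hu, rfl⟩ := Set.mem_smul_set.mp hu'
      obtain ⟨v, hv, rfl⟩ := Set.mem_smul_set.mp hv'
      have hmax := hw.2
      have huMax : ∀ u₂ ∈ B x, f u₂ ≤ f u := by
        intro u₂ hu₂
        by_contra hlt
        push_neg at hlt
        have hmem : (1-θ) • u₂ + θ • v ∈ B ((1-θ) • x + θ • y) := by
          rw [← hBeq]
          exact Set.add_mem_add (Set.smul_mem_smul_set hu₂) (Set.smul_mem_smul_set hv)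
        have := hmax _ hmem
        rw [ef, ef] at this
        nlinarith
      have hvMax : ∀ v₂ ∈ B y, f v₂ ≤ f v := by
        intro v₂ hv₂
        by_contra hlt
        push_neg at hlt
        have hmem : (1-θ) • u + θ • v₂ ∈ B ((1-θ) • x + θ • y) := by
          rw [← hBeq]
          exact Set.add_mem_add (Set.smul_mem_smul_set hu) (Set.smul_mem_smul_set hv₂)
        have := hmax _ hmem
        rw [ef, ef] at this
        nlinarith
      exact Set.add_mem_add (Set.smul_mem_smul_set ⟨hu, huMax⟩)
        (Set.smul_mem_smul_set ⟨hv, hvMax⟩)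

/-- directed intersections of affine maps -/
theorem dirint_affmap (hKconv : Convex ℝ K) {ι : Type*} [Nonempty ι]
    (B : ι → S → Set W) (hB : ∀ i, AffMap K (B i))
    (hdir : ∀ i j, ∃ k, ∀ z ∈ K, B k z ⊆ B i z ∧ B k z ⊆ B j z) :
    AffMap K (fun z => ⋂ i, B i z) := by
  constructor
  · intro z hz
    have hBz := fun i => (hB i).1 z hz
    refine ⟨?_, ?_, ?_⟩
    · refine IsCompact.nonempty_iInter_of_directed_nonempty_isCompact_isClosed
        (fun i => B i z) ?_ (fun i => (hBz i).1) (fun i => (hBz i).2.1)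
        (fun i => (hBz i).2.1.isClosed)
      intro i j
      obtain ⟨k, hk⟩ := hdir i j
      exact ⟨k, (hk z hz).1, (hk z hz).2⟩
    · exact IsCompact.of_isClosed_subset (hBz (Classical.arbitrary ι)).2.1
        (isClosed_iInter (fun i => (hBz i).2.1.isClosed)) (Set.iInter_subset _ _)
    · exact convex_iInter (fun i => (hBz i).2.2)
  · intro x hx y hy θ h0 h1
    have h1θ : (0:ℝ) < 1 - θ := by linarith
    apply Set.Subset.antisymm
    · intro w hw
      obtain ⟨u', hu', v', hv', rfl⟩ := Set.mem_add.mp hw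
      obtain ⟨u, hu, rfl⟩ := Set.mem_smul_set.mp hu'
      obtain ⟨v, hv, rfl⟩ := Set.mem_smul_set.mp hv'
      refine Set.mem_iInter.mpr (fun i => ?_)
      rw [← (hB i).2 x hx y hy θ h0 h1]
      exact Set.add_mem_add (Set.smul_mem_smul_set (Set.mem_iInter.mp hu i))
        (Set.smul_mem_smul_set (Set.mem_iInter.mp hv i))
    · intro w hw
      classical
      set F : ι → Set (W × W) := fun i =>
        {q | q.1 ∈ B i x ∧ q.2 ∈ B i y ∧ (1-θ) • q.1 + θ • q.2 = w} with hFdef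
      have hFc : ∀ i, IsCompact (F i) := by
        intro i
        have h1' : IsCompact ((B i x) ×ˢ (B i y)) :=
          ((hB i).1 x hx).2.1.prod ((hB i).1 y hy).2.1
        have h2' : IsClosed {q : W × W | (1-θ) • q.1 + θ • q.2 = w} :=
          isClosed_eq ((continuous_fst.const_smul _).add (continuous_snd.const_smul _))
            continuous_const
        have : F i = ((B i x) ×ˢ (B i y)) ∩ {q | (1-θ) • q.1 + θ • q.2 = w} := by
          ext q; simp [hFdef, Set.mem_prod, and_assoc]
        rw [this]
        exact h1'.inter_right h2'
      have hFne : ∀ i, (F i).Nonempty := by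
        intro i
        have hwB : w ∈ B i ((1-θ) • x + θ • y) := Set.mem_iInter.mp hw i
        rw [← (hB i).2 x hx y hy θ h0 h1] at hwB
        obtain ⟨u', hu', v', hv', huv⟩ := Set.mem_add.mp hwB
        obtain ⟨u, hu, rfl⟩ := Set.mem_smul_set.mp hu'
        obtain ⟨v, hv, rfl⟩ := Set.mem_smul_set.mp hv'
        exact ⟨(u, v), hu, hv, huv⟩
      have hFdir : Directed (· ⊇ ·) F := by
        intro i j
        obtain ⟨k, hk⟩ := hdir i j
        exact ⟨k, fun q hq => ⟨(hk x hx).1 hq.1, (hk y hy).1 hq.2.1, hq.2.2⟩,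
          fun q hq => ⟨(hk x hx).2 hq.1, (hk y hy).2 hq.2.1, hq.2.2⟩⟩
      obtain ⟨q, hq⟩ := IsCompact.nonempty_iInter_of_directed_nonempty_isCompact_isClosed
        F hFdir hFne hFc (fun i => (hFc i).isClosed)
      have hq' := Set.mem_iInter.mp hq
      have hcomb : (1-θ) • q.1 + θ • q.2 = w := (hq' (Classical.arbitrary ι)).2.2
      rw [← hcomb]
      exact Set.add_mem_add
        (Set.smul_mem_smul_set (Set.mem_iInter.mpr (fun i => (hq' i).1)))
        (Set.smul_mem_smul_set (Set.mem_iInter.mpr (fun i => (hq' i).2.1)))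

/-- existence of affine selections of affine maps -/
theorem affmap_selection (hKconv : Convex ℝ K) {A : S → Set W} (hA : AffMap K A) :
    ∃ a : S → W, (∀ z ∈ K, a z ∈ A z) ∧
      (∀ x ∈ K, ∀ y ∈ K, ∀ θ : ℝ, 0 < θ → θ < 1 →
        a ((1 - θ) • x + θ • y) = (1 - θ) • a x + θ • a y) := by
  classical
  let P : Set (S × W) → Prop := fun G =>
    ∃ B : S → Set W, AffMap K B ∧ (∀ z ∈ K, B z ⊆ A z) ∧
      G = {p : S × W | p.1 ∈ K ∧ p.2 ∈ B p.1}
  have hGA : P {p : S × W | p.1 ∈ K ∧ p.2 ∈ A p.1} := ⟨A, hA, fun z _ => le_refl _, rfl⟩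
  have hlb : ∀ c ⊆ {G | P G}, IsChain (· ⊆ ·) c → c.Nonempty →
      ∃ lb ∈ {G | P G}, ∀ s ∈ c, lb ⊆ s := by
    intro c hcP hchain hcne
    choose Bf hBf hBsub hBeq using fun (G : c) => hcP G.2
    haveI : Nonempty c := Set.Nonempty.to_subtype hcne
    have hmono : ∀ (i j : c), (i : Set (S × W)) ⊆ j → ∀ z ∈ K, Bf i z ⊆ Bf j z := by
      intro i j hij z hz w hw
      have : ((z, w) : S × W) ∈ (i : Set (S × W)) := by rw [hBeq i]; exact ⟨hz, hw⟩
      have := hij this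
      rw [hBeq j] at this
      exact this.2
    have hdir : ∀ (i j : c), ∃ k : c, ∀ z ∈ K, Bf k z ⊆ Bf i z ∧ Bf k z ⊆ Bf j z := by
      intro i j
      rcases eq_or_ne i j with rfl | hne
      · exact ⟨i, fun z _ => ⟨le_refl _, le_refl _⟩⟩
      rcases hchain i.2 j.2 (fun h => hne (Subtype.ext h)) with h | h
      · exact ⟨i, fun z hz => ⟨le_refl _, hmono i j h z hz⟩⟩
      · exact ⟨j, fun z hz => ⟨hmono j i h z hz, le_refl _⟩⟩
    have key := dirint_affmap hKconv Bf hBf hdir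
    refine ⟨{p : S × W | p.1 ∈ K ∧ p.2 ∈ ⋂ i, Bf i p.1}, ⟨fun z => ⋂ i, Bf i z, key, ?_, rfl⟩,
      ?_⟩
    · intro z hz
      exact (Set.iInter_subset _ (Classical.arbitrary c)).trans (hBsub _ z hz)
    · intro G hGc p hp
      rw [show G = {p : S × W | p.1 ∈ K ∧ p.2 ∈ Bf ⟨G, hGc⟩ p.1} from hBeq ⟨G, hGc⟩]
      exact ⟨hp.1, Set.mem_iInter.mp hp.2 ⟨G, hGc⟩⟩
  obtain ⟨M, _, hMmin⟩ := zorn_superset_nonempty {G | P G} hlb _ hGA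
  obtain ⟨hMP, hMle⟩ := hMmin
  obtain ⟨B, hBaff, hBsubA, rfl⟩ := hMP
  have hsingle : ∀ z ∈ K, ∀ p ∈ B z, ∀ q ∈ B z, p = q := by
    intro z hz p hp q hq
    by_contra hne
    obtain ⟨f, hf⟩ := geometric_hahn_banach_point_point hne
    have harg := argmax_affmap hKconv f hBaff
    have hG'P : P {p : S × W | p.1 ∈ K ∧ p.2 ∈ argmaxMap f B p.1} :=
      ⟨argmaxMap f B, harg.1, fun z' hz' => (harg.2 z').trans (hBsubA z' hz'), rfl⟩
    have hsub : {p : S × W | p.1 ∈ K ∧ p.2 ∈ argmaxMap f B p.1}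
        ⊆ {p : S × W | p.1 ∈ K ∧ p.2 ∈ B p.1} := fun p hp => ⟨hp.1, harg.2 _ hp.2⟩
    have heq := hMle hG'P hsub
    have hzp : ((z, p) : S × W) ∈ {q : S × W | q.1 ∈ K ∧ q.2 ∈ B q.1} := ⟨hz, hp⟩
    have hp' : p ∈ argmaxMap f B z := (heq hzp).2
    exact absurd (hp'.2 q hq) (not_le.mpr hf)
  have hnev : ∀ z, z ∈ K → ∃ w, w ∈ B z := fun z hz => (hBaff.1 z hz).1
  choose! a ha using hnev
  refine ⟨a, fun z hz => hBsubA z hz (ha z hz), ?_⟩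
  intro x hx y hy θ h0 h1
  have hzK : (1-θ) • x + θ • y ∈ K := memCombo hKconv hx hy h0 h1
  have h1' : a ((1-θ) • x + θ • y) ∈ B ((1-θ) • x + θ • y) := ha _ hzK
  have h2' : (1-θ) • a x + θ • a y ∈ B ((1-θ) • x + θ • y) := by
    rw [← hBaff.2 x hx y hy θ h0 h1]
    exact Set.add_mem_add (Set.smul_mem_smul_set (ha x hx)) (Set.smul_mem_smul_set (ha y hy))
  exact hsingle _ hzK _ h1' _ h2'

/-- affine selections through a prescribed point -/
theorem affmap_selection_through (hKconv : Convex ℝ K) {A : S → Set W} (hA : AffMap K A)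
    (hAcl : ∀ z, IsClosed (A z)) {x : S} (hx : x ∈ K) {y : W} (hy : y ∈ A x) :
    ∃ a : S → W, (∀ z ∈ K, a z ∈ A z) ∧
      (∀ u ∈ K, ∀ v ∈ K, ∀ θ : ℝ, 0 < θ → θ < 1 →
        a ((1 - θ) • u + θ • v) = (1 - θ) • a u + θ • a v) ∧ a x = y := by
  classical
  set Q : Set (↥K → W) := {a | (∀ z : ↥K, a z ∈ A (z : S)) ∧
    ∀ (u v : ↥K) (θ : ℝ) (h : 0 < θ ∧ θ < 1),
      a ⟨(1-θ) • (u : S) + θ • (v : S), memCombo hKconv u.2 v.2 h.1 h.2⟩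
        = (1-θ) • a u + θ • a v} with hQdef
  have hQeq : Q = {a : ↥K → W | ∀ z : ↥K, a z ∈ A (z : S)} ∩
      (⋂ (u : ↥K), ⋂ (v : ↥K), ⋂ (θ : ℝ), ⋂ (h : 0 < θ ∧ θ < 1),
        {a : ↥K → W | a ⟨(1-θ) • (u : S) + θ • (v : S), memCombo hKconv u.2 v.2 h.1 h.2⟩
          = (1-θ) • a u + θ • a v}) := by
    ext a
    simp only [hQdef, Set.mem_setOf_eq, Set.mem_inter_iff, Set.mem_iInter]
  have hQcompact : IsCompact Q := by
    rw [hQeq]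
    have h1' : IsCompact {a : ↥K → W | ∀ z : ↥K, a z ∈ A (z : S)} := by
      have h := isCompact_univ_pi (ι := ↥K) (s := fun z => A (z : S))
        (fun z => (hA.1 _ z.2).2.1)
      convert h using 1
      ext a
      simp [Set.mem_univ_pi]
    refine h1'.inter_right ?_
    refine isClosed_iInter (fun u => isClosed_iInter (fun v =>
      isClosed_iInter (fun θ => isClosed_iInter (fun h => ?_))))
    exact isClosed_eq (continuous_apply _)
      (((continuous_apply u).const_smul _).add ((continuous_apply v).const_smul _))
  have hQconvex : Convex ℝ Q := by
    intro a ha b hb p q hp hq hpq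
    constructor
    · intro z
      exact (hA.1 _ z.2).2.2 (ha.1 z) (hb.1 z) hp hq hpq
    · intro u v θ h
      simp only [Pi.add_apply, Pi.smul_apply]
      rw [ha.2 u v θ h, hb.2 u v θ h]
      module
  set E : Set W := (fun a : ↥K → W => a ⟨x, hx⟩) '' Q with hEdef
  have hEcompact : IsCompact E := hQcompact.image (continuous_apply _)
  have hEconvex : Convex ℝ E := by
    rintro _ ⟨a, ha, rfl⟩ _ ⟨b, hb, rfl⟩ p q hp hq hpq
    exact ⟨p • a + q • b, hQconvex ha hb hp hq hpq, rfl⟩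
  have hself : ∀ f : W →L[ℝ] ℝ, ∃ a ∈ Q, ∀ w ∈ A x, f w ≤ f (a ⟨x, hx⟩) := by
    intro f
    obtain ⟨harg, hsub⟩ := argmax_affmap hKconv f hA
    obtain ⟨a, haA, haAff⟩ := affmap_selection hKconv harg
    refine ⟨fun z => a (z : S), ⟨?_, ?_⟩, ?_⟩
    · intro z
      exact hsub _ (haA _ z.2)
    · intro u v θ h
      exact haAff u u.2 v v.2 θ h.1 h.2
    · intro w hw
      exact (haA x hx).2 w hw
  have hyE : y ∈ E := by
    by_contra hyE
    obtain ⟨f, u, hfa, hfy⟩ :=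
      geometric_hahn_banach_closed_point hEconvex hEcompact.isClosed hyE
    obtain ⟨a, haQ, hamax⟩ := hself f
    have h1' : f (a ⟨x, hx⟩) < u := hfa _ ⟨a, haQ, rfl⟩
    have h2' : f y ≤ f (a ⟨x, hx⟩) := hamax y hy
    linarith
  obtain ⟨a, haQ, hax⟩ := hyE
  refine ⟨fun z => if h : z ∈ K then a ⟨z, h⟩ else 0, ?_, ?_, ?_⟩
  · intro z hz
    simp only [dif_pos hz]
    exact haQ.1 ⟨z, hz⟩
  · intro u hu v hv θ h0 h1
    have hcm := memCombo hKconv hu hv h0 h1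
    simp only [dif_pos hcm, dif_pos hu, dif_pos hv]
    exact haQ.2 ⟨u, hu⟩ ⟨v, hv⟩ θ ⟨h0, h1⟩
  · simp only [dif_pos hx]
    exact hax

/-- Jensen for affine selections -/
theorem jensen (hKconv : Convex ℝ K) (a : S → W)
    (haff : ∀ x ∈ K, ∀ y ∈ K, ∀ θ : ℝ, 0 < θ → θ < 1 →
      a ((1 - θ) • x + θ • y) = (1 - θ) • a x + θ • a y) :
    ∀ (n : ℕ) (θ : Fin n → ℝ) (xs : Fin n → S), (∀ j, 0 ≤ θ j) → ∑ j, θ j = 1 →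
      (∀ j, xs j ∈ K) → a (∑ j, θ j • xs j) = ∑ j, θ j • a (xs j) := by
  intro n
  induction n with
  | zero => intro θ xs h0 h1 hm; simp at h1
  | succ n ih =>
    intro θ xs h0 h1 hm
    set s : ℝ := ∑ j : Fin n, θ j.castSucc with hs
    have hsl : s + θ (Fin.last n) = 1 := by rw [hs, ← Fin.sum_univ_castSucc]; exact h1
    have hs0 : 0 ≤ s := Finset.sum_nonneg (fun j _ => h0 _)
    rw [Fin.sum_univ_castSucc (f := fun j => θ j • xs j),
      Fin.sum_univ_castSucc (f := fun j => θ j • a (xs j))]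
    rcases eq_or_lt_of_le (h0 (Fin.last n)) with hl0 | hl0
    · have hθl : θ (Fin.last n) = 0 := hl0.symm
      rw [hθl, zero_smul, zero_smul, add_zero, add_zero]
      exact ih _ _ (fun j => h0 _) (by rw [← hs]; linarith) (fun j => hm _)
    · rcases eq_or_lt_of_le hs0 with hs0' | hs0'
      · have hθl1 : θ (Fin.last n) = 1 := by linarith
        have hzero : ∀ j : Fin n, θ j.castSucc = 0 := by
          intro j
          have := (Finset.sum_eq_zero_iff_of_nonneg
            (fun j _ => h0 (Fin.castSucc j))).mp hs0'.symm
          exact this j (Finset.mem_univ j)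
        have ev : ∑ j : Fin n, θ j.castSucc • xs j.castSucc = 0 := by
          rw [Finset.sum_congr rfl (fun j _ => by rw [hzero j, zero_smul]),
            Finset.sum_const_zero]
        have ea : ∑ j : Fin n, θ j.castSucc • a (xs j.castSucc) = 0 := by
          rw [Finset.sum_congr rfl (fun j _ => by rw [hzero j, zero_smul]),
            Finset.sum_const_zero]
        rw [ev, ea, hθl1, one_smul, one_smul, zero_add, zero_add]
      · have hθl1 : θ (Fin.last n) < 1 := by linarith
        have hmul : ∀ r : ℝ, s * (r / s) = r := fun r => by field_simp
        set x' : S := ∑ j : Fin n, (θ j.castSucc / s) • xs j.castSucc with hx'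
        have hx'K : x' ∈ K := by
          refine hKconv.sum_mem (fun j _ => div_nonneg (h0 _) hs0) ?_ (fun j _ => hm _)
          rw [← Finset.sum_div, ← hs, div_self hs0'.ne']
        have hIH : a x' = ∑ j : Fin n, (θ j.castSucc / s) • a (xs j.castSucc) := by
          refine ih _ _ (fun j => div_nonneg (h0 _) hs0) ?_ (fun j => hm _)
          rw [← Finset.sum_div, ← hs, div_self hs0'.ne']
        have ev : ∑ j : Fin n, θ j.castSucc • xs j.castSucc = s • x' := by
          rw [hx', Finset.smul_sum]
          refine Finset.sum_congr rfl (fun j _ => ?_)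
          rw [smul_smul, hmul]
        have ea : ∑ j : Fin n, θ j.castSucc • a (xs j.castSucc) = s • a x' := by
          rw [hIH, Finset.smul_sum]
          refine Finset.sum_congr rfl (fun j _ => ?_)
          rw [smul_smul, hmul]
        rw [ev, ea]
        have hseq : s = 1 - θ (Fin.last n) := by linarith
        rw [hseq]
        exact haff x' hx'K (xs (Fin.last n)) (hm _) (θ (Fin.last n)) hl0 hθl1

/-- positive decompositions suffice -/
theorem mem_decSum_of_pos (hT : GoodVals K T) {x : S} {y : W}
    (hyp : ∀ (N : ℕ) (θ : Fin N → ℝ) (xs : Fin N → S),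
      (∀ j, 0 < θ j) → ∑ j, θ j = 1 → (∀ j, xs j ∈ K) →
      x = ∑ j, θ j • xs j → y ∈ ∑ j, θ j • T (xs j))
    (d : Dec K x) : y ∈ decSum T d := by
  classical
  have hsum1 : ∑ k : Fin (Finset.univ.filter (fun j => d.θ j ≠ 0) : Finset (Fin d.n)).card,
      d.θ ((Finset.univ.filter (fun j => d.θ j ≠ 0)).equivFin.symm k : Fin d.n) = 1 := by
    rw [sum_filter_equiv d.θ d.θ (fun j h => h)]
    exact d.sum_one
  have hpos : ∀ k, 0 < d.θ ((Finset.univ.filter (fun j => d.θ j ≠ 0)).equivFin.symm k :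
      Fin d.n) := by
    intro k
    have hk := ((Finset.univ.filter (fun j => d.θ j ≠ 0)).equivFin.symm k).2
    have hne := (Finset.mem_filter.mp hk).2
    exact lt_of_le_of_ne (d.nonneg _) (Ne.symm hne)
  have hxeq : x = ∑ k : Fin (Finset.univ.filter
      (fun j => d.θ j ≠ 0) : Finset (Fin d.n)).card,
      d.θ ((Finset.univ.filter (fun j => d.θ j ≠ 0)).equivFin.symm k : Fin d.n) •
        d.xs ((Finset.univ.filter (fun j => d.θ j ≠ 0)).equivFin.symm k : Fin d.n) := by
    rw [sum_filter_equiv d.θ (fun j => d.θ j • d.xs j) (fun j h => by show d.θ j • d.xs j = 0; rw [h, zero_smul])]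
    exact d.eq
  have hmem := hyp _ _ _ hpos hsum1 (fun k => d.mem _) hxeq
  rwa [sum_filter_equiv d.θ (fun j => d.θ j • T (d.xs j))
    (fun j h => by
      show d.θ j • T (d.xs j) = 0
      rw [h, Set.zero_smul_set (hT _ (d.mem j)).1])] at hmem

end Main

end Stmt5Aux

open Stmt5Aux

/-- If the suspension cone of a convex set `K` has the Riesz decomposition
property, then every convex set-valued map on `K` with nonempty compact convex
values in a Hausdorff locally convex real TVS admits an affine selection;
and an affine selection through `(x, y)` exists iff `y` belongs to every
Minkowski combination `θ₁ • T x₁ + ⋯ + θ_N • T x_N` over convex decompositions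
`x = θ₁ x₁ + ⋯ + θ_N x_N` of `x` in `K`. -/
theorem stmt5 {S W : Type*} [AddCommGroup S] [Module ℝ S]
    [AddCommGroup W] [Module ℝ W] [TopologicalSpace W] [IsTopologicalAddGroup W]
    [ContinuousSMul ℝ W] [T2Space W] [LocallyConvexSpace ℝ W]
    (K : Set S) (hKne : K.Nonempty) (hKconv : Convex ℝ K)
    (C : Set (ℝ × S))
    (hC : C = {p : ℝ × S | ∃ l : ℝ, 0 < l ∧ ∃ x ∈ K, p = (l, l • x)} ∪ {0})
    (hRiesz : ∀ u ∈ C, ∀ v ∈ C, ∀ w ∈ C, u + v - w ∈ C →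
      ∃ w₁ ∈ C, ∃ w₂ ∈ C, w = w₁ + w₂ ∧ u - w₁ ∈ C ∧ v - w₂ ∈ C)
    (T : S → Set W)
    (hT : ∀ x ∈ K, (T x).Nonempty ∧ IsCompact (T x) ∧ Convex ℝ (T x))
    (hTconvmap : ∀ x ∈ K, ∀ y ∈ K, ∀ θ : ℝ, 0 < θ → θ < 1 →
      (1 - θ) • T x + θ • T y ⊆ T ((1 - θ) • x + θ • y)) :
    (∃ a : S → W, (∀ x ∈ K, a x ∈ T x) ∧
      (∀ x ∈ K, ∀ y ∈ K, ∀ θ : ℝ, 0 < θ → θ < 1 →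
        a ((1 - θ) • x + θ • y) = (1 - θ) • a x + θ • a y)) ∧
    (∀ x ∈ K, ∀ y ∈ T x,
      ((∃ a : S → W, (∀ z ∈ K, a z ∈ T z) ∧
          (∀ u ∈ K, ∀ v ∈ K, ∀ θ : ℝ, 0 < θ → θ < 1 →
            a ((1 - θ) • u + θ • v) = (1 - θ) • a u + θ • a v) ∧
          a x = y) ↔
        (∀ (N : ℕ) (θ : Fin N → ℝ) (xs : Fin N → S),
          (∀ j, 0 < θ j) → ∑ j, θ j = 1 → (∀ j, xs j ∈ K) →
          x = ∑ j, θ j • xs j → y ∈ ∑ j, θ j • T (xs j)))) := by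
  have hCe : ConeEq K C := hC
  have hTg : GoodVals K T := hT
  have hTcm : ConvMap K T := hTconvmap
  have hAff : AffMap K (Tstar K T) := by
    constructor
    · intro z hz
      exact ⟨Tstar_nonempty hCe hKne hKconv hRiesz hTg hTcm hz,
        Tstar_isCompact hCe hKne hKconv hRiesz hTg hTcm hz,
        Tstar_convex hCe hKne hKconv hRiesz hTg hTcm z⟩
    · intro x hx y hy θ h0 h1
      exact Tstar_affine hCe hKne hKconv hRiesz hTg hTcm hx hy h0 h1
  constructor
  · obtain ⟨a, ha, haff⟩ := affmap_selection hKconv hAff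
    exact ⟨a, fun z hz => Tstar_subset hCe hKne hKconv hRiesz hTg hTcm hz (ha z hz), haff⟩
  · intro x hx y hyT
    constructor
    · rintro ⟨a, haT, haff, hax⟩
      intro N θ xs hpos hsum hmem hxeq
      have hj := jensen hKconv a haff N θ xs (fun j => (hpos j).le) hsum hmem
      rw [← hxeq] at hj
      rw [← hax, hj]
      exact sum_mem_setSum _ _ (fun j => Set.smul_mem_smul_set (haT _ (hmem j)))
    · intro hyp
      have hyT' : y ∈ Tstar K T x :=
        Set.mem_iInter.mpr (fun d => mem_decSum_of_pos hTg hyp d)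
      obtain ⟨a, haT, haff, hax⟩ := affmap_selection_through hKconv hAff
        (Tstar_closed hCe hKne hKconv hRiesz hTg hTcm) hx hyT'
      exact ⟨a, fun z hz => Tstar_subset hCe hKne hKconv hRiesz hTg hTcm hz (haT z hz),
        haff, hax⟩
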